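/- The equivalence relation ≃_𝒜 on lists is a congruence for stable sorting: if l₁ ≃_𝒜 l₂ then sort^i_a(l₁) ≃_𝒜 sort^i_a(l₂) for any a ∈ 𝒜. -/

import Mathlib

theorem sort_congr_of_equiv {X V : Type*} [LinearOrder V] (𝒜 : Set (X → V))
    (a : X → V) (ha : a ∈ 𝒜) (l₁ l₂ : List X)
    (h : List.Forall₂ (fun x y => ∀ b ∈ 𝒜, b x = b y) l₁ l₂) :
    List.Forall₂ (fun x y => ∀ b ∈ 𝒜, b x = b y)
      (List.mergeSort l₁ (fun x y => decide (a x ≤ a y)))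
      (List.mergeSort l₂ (fun x y => decide (a x ≤ a y))) := by
  rw [List.forall₂_iff_zip] at h
  obtain ⟨hlen, hz⟩ := h
  set z : List (X × X) := l₁.zip l₂ with hzdef
  set c : X × X → X × X → Bool := fun p q => decide (a p.1 ≤ a q.1) with hc
  have h1 : (z.mergeSort c).map Prod.fst = l₁.mergeSort (fun x y => decide (a x ≤ a y)) := by
    rw [List.map_mergeSort (f := Prod.fst) (s := fun x y => decide (a x ≤ a y)) (fun p _ q _ => rfl)]
    rw [List.map_fst_zip (le_of_eq hlen)]
  have h2 : (z.mergeSort c).map Prod.snd = l₂.mergeSort (fun x y => decide (a x ≤ a y)) := by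
    rw [List.map_mergeSort (f := Prod.snd) (s := fun x y => decide (a x ≤ a y))
      (fun p hp q hq => by
        have e1 : a p.1 = a p.2 := hz (by simpa using hp) a ha
        have e2 : a q.1 = a q.2 := hz (by simpa using hq) a ha
        simp [hc, e1, e2])]
    rw [List.map_snd_zip (ge_of_eq hlen)]
  rw [List.forall₂_iff_zip]
  constructor
  · simp [← h1, ← h2]
  · intro x y hxy
    rw [← h1, ← h2, List.zip_map'] at hxy
    simp only [List.mem_map] at hxy
    obtain ⟨p, hp, hpe⟩ := hxy
    have : p ∈ z := (List.mem_mergeSort).mp hp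
    cases hpe
    exact hz this
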